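/- Let M: E(T) → ℝ_+ with IM_p < 1 on all vertices, and define the rescaled function c(α) = M(α) / (1 − IM_p(b(α)))^{p/p′}. Then M is the co-potential of a positive measure on ∂T if and only if, for every edge α that is not a leaf, c(α) = S / (1 + S^{p′−1})^{p−1}, where S = Σ_{β child of α} c(β). -/

import Mathlib

open scoped ENNReal
open MeasureTheory

/-- A locally finite rooted tree, given by its set of edges. The root edge has no parent,
every other edge has a parent, and every edge has finitely many children. -/
structure RTree where
  E : Type
  root : E
  parent : E → Option E
  parent_root : parent root = none
  parent_isSome : ∀ α, α ≠ root → (parent α).isSome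
  level : E → ℕ
  level_root : level root = 0
  level_parent : ∀ α β, parent α = some β → level α = level β + 1
  locFin : ∀ α, {β | parent β = some α}.Finite

namespace RTree

variable (T : RTree)

/-- `Le T α β` : the edge `α` is an ancestor of (or equal to) the edge `β`,
i.e. `α ≤ β` in the natural partial order on edges. -/
def Le (α β : T.E) : Prop :=
  Relation.ReflTransGen (fun x y => T.parent y = some x) α β

/-- The boundary of `T`: half-infinite geodesics starting at the root edge. -/
structure Boundary where
  seq : ℕ → T.E
  seq_zero : seq 0 = T.root
  seq_parent : ∀ n, T.parent (seq (n + 1)) = some (seq n)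

/-- The boundary `∂T_α` of the tent over the edge `α`: boundary points whose
geodesic passes through `α`. -/
def tentB (α : T.E) : Set T.Boundary := {ζ | ∃ n, ζ.seq n = α}

/-- The standard topology on the boundary, with the tent boundaries as a basis. -/
def ttop : TopologicalSpace T.Boundary :=
  TopologicalSpace.generateFrom {s | ∃ α, s = T.tentB α}

/-- The Borel σ-algebra on the boundary. -/
def tborel : MeasurableSpace T.Boundary := @borel _ T.ttop

/-- The set of edges of the tent `T_α`. -/
def tentE (α : T.E) : Set T.E := {β | T.Le α β}

/-- The relative potential `I_α f (ζ)`, summing `f` over the edges of the geodesic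
from the root to `ζ` that lie in the tent `T_α`.  Taking `α` to be the root edge
gives the potential `If`. -/
noncomputable def relPot (α : T.E) (f : T.E → ℝ≥0∞) (ζ : T.Boundary) : ℝ≥0∞ :=
  ∑' n, Set.indicator (T.tentE α) f (ζ.seq n)

/-- The relative `p`-energy `‖f‖_{ℓ^p(E(T_α))}^p`. -/
noncomputable def relEnergy (p : ℝ) (α : T.E) (f : T.E → ℝ≥0∞) : ℝ≥0∞ :=
  ∑' β, Set.indicator (T.tentE α) (fun γ => f γ ^ p) β

/-- The relative `p`-capacity `c_{p,α}(E)` of `E ⊆ ∂T`, with the tent `T_α`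
as ambient tree. -/
noncomputable def relCap (p : ℝ) (α : T.E) (E : Set T.Boundary) : ℝ≥0∞ :=
  ⨅ f ∈ {f : T.E → ℝ≥0∞ | ∀ ζ ∈ E, 1 ≤ T.relPot α f ζ}, T.relEnergy p α f

/-- The `p`-capacity of a subset of the boundary. -/
noncomputable def cap (p : ℝ) (E : Set T.Boundary) : ℝ≥0∞ := T.relCap p T.root E

end RTree

open RTree

namespace BCF

variable {T : RTree}

lemma eq_root_of_level_eq_zero {α : T.E} (h : T.level α = 0) : α = T.root := by
  by_contra hne
  obtain ⟨β, hβ⟩ := Option.isSome_iff_exists.mp (T.parent_isSome α hne)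
  have := T.level_parent α β hβ
  omega

lemma level_lt_of_parent {α β : T.E} (h : T.parent α = some β) : T.level β < T.level α := by
  have := T.level_parent α β h; omega

lemma ne_root_of_parent {α β : T.E} (h : T.parent α = some β) : α ≠ T.root := by
  intro he; rw [he, T.parent_root] at h; cases h

lemma level_le_of_le {γ α : T.E} (h : T.Le γ α) : T.level γ ≤ T.level α := by
  induction h with
  | refl => exact le_rfl
  | tail _ hstep ih => exact ih.trans (level_lt_of_parent hstep).le

lemma le_refl' (α : T.E) : T.Le α α := Relation.ReflTransGen.refl

lemma eq_root_of_le_root {γ : T.E} (h : T.Le γ T.root) : γ = T.root := by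
  rcases (Relation.ReflTransGen.cases_tail h) with h | ⟨c, _, hc⟩
  · exact h.symm
  · rw [T.parent_root] at hc; cases hc

lemma pathSet_root : {γ : T.E | T.Le γ T.root} = {T.root} := by
  ext γ; simp only [Set.mem_setOf_eq, Set.mem_singleton_iff]
  exact ⟨eq_root_of_le_root, fun h => h ▸ le_refl' _⟩

lemma pathSet_parent {α β : T.E} (h : T.parent α = some β) :
    {γ : T.E | T.Le γ α} = insert α {γ : T.E | T.Le γ β} := by
  ext γ
  simp only [Set.mem_setOf_eq, Set.mem_insert_iff]
  constructor
  · intro hle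
    rcases Relation.ReflTransGen.cases_tail hle with h' | ⟨c, hc1, hc2⟩
    · exact Or.inl h'.symm
    · right; rw [h] at hc2; cases hc2; exact hc1
  · rintro (rfl | hle)
    · exact le_refl' _
    · exact hle.tail h

lemma pathSet_finite (α : T.E) : {γ : T.E | T.Le γ α}.Finite := by
  suffices h : ∀ (n : ℕ) (α : T.E), T.level α = n → {γ : T.E | T.Le γ α}.Finite from h _ α rfl
  intro n
  induction n using Nat.strong_induction_on with
  | _ n IH =>
    intro α hn
    by_cases hr : α = T.root
    · rw [hr, pathSet_root]; exact Set.finite_singleton _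
    · obtain ⟨β, hβ⟩ := Option.isSome_iff_exists.mp (T.parent_isSome α hr)
      rw [pathSet_parent hβ]
      exact (IH (T.level β) (hn ▸ level_lt_of_parent hβ) β rfl).insert _

lemma pathSet_strict_child {α β : T.E} (h : T.parent β = some α) :
    {γ : T.E | T.Le γ β ∧ γ ≠ β} = {γ : T.E | T.Le γ α} := by
  ext γ
  simp only [Set.mem_setOf_eq]
  constructor
  · rintro ⟨hle, hne⟩
    rcases Relation.ReflTransGen.cases_tail hle with h' | ⟨c, hc1, hc2⟩
    · exact absurd h'.symm hne
    · rw [h] at hc2; cases hc2; exact hc1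
  · intro hle
    refine ⟨hle.tail h, fun he => ?_⟩
    have h1 := level_le_of_le hle
    have h2 := level_lt_of_parent h
    rw [he] at h1; omega

lemma pathSet_insert (α : T.E) :
    {γ : T.E | T.Le γ α} = insert α {γ : T.E | T.Le γ α ∧ γ ≠ α} := by
  ext γ
  simp only [Set.mem_setOf_eq, Set.mem_insert_iff]
  constructor
  · intro h; by_cases he : γ = α
    · exact Or.inl he
    · exact Or.inr ⟨h, he⟩
  · rintro (rfl | ⟨h, _⟩)
    · exact le_refl' _
    · exact h

lemma pathSet_strict_finite (α : T.E) : {γ : T.E | T.Le γ α ∧ γ ≠ α}.Finite :=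
  (pathSet_finite α).subset (fun _ h => h.1)

lemma seq_level (ζ : T.Boundary) (n : ℕ) : T.level (ζ.seq n) = n := by
  induction n with
  | zero => rw [ζ.seq_zero, T.level_root]
  | succ n ih => rw [T.level_parent _ _ (ζ.seq_parent n), ih]

lemma seq_le (ζ : T.Boundary) {n m : ℕ} (h : n ≤ m) : T.Le (ζ.seq n) (ζ.seq m) := by
  induction m with
  | zero => cases Nat.le_zero.mp h; exact le_refl' _
  | succ m ih =>
    rcases Nat.lt_or_ge n (m+1) with h' | h'
    · exact (ih (Nat.lt_succ_iff.mp h')).tail (ζ.seq_parent m)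
    · have : n = m + 1 := le_antisymm h h'
      rw [this]; exact le_refl' _

lemma seq_eq_of_seq_eq {ζ ξ : T.Boundary} {m : ℕ} (h : ζ.seq m = ξ.seq m) :
    ∀ j ≤ m, ζ.seq j = ξ.seq j := by
  induction m with
  | zero => intro j hj; cases Nat.le_zero.mp hj; exact h
  | succ m ih =>
    intro j hj
    have hm : ζ.seq m = ξ.seq m := by
      have h1 := ζ.seq_parent m
      have h2 := ξ.seq_parent m
      rw [h] at h1; rw [h1] at h2; exact (Option.some_injective _ h2)
    rcases Nat.lt_or_ge j (m+1) with h' | h'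
    · exact ih hm j (Nat.lt_succ_iff.mp h')
    · have : j = m + 1 := le_antisymm hj h'
      rw [this]; exact h

lemma mem_tentB_iff {ζ : T.Boundary} {α : T.E} : ζ ∈ T.tentB α ↔ ζ.seq (T.level α) = α := by
  constructor
  · rintro ⟨n, hn⟩
    have := seq_level ζ n
    rw [hn] at this; rw [this]; exact hn
  · intro h; exact ⟨_, h⟩

lemma tentB_subset {α β : T.E} (h : T.Le α β) : T.tentB β ⊆ T.tentB α := by
  intro ζ hζ
  rw [mem_tentB_iff] at hζ ⊢
  induction h with
  | refl => exact hζ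
  | @tail b c hab hbc ih =>
    apply ih
    have hp := ζ.seq_parent (T.level b)
    have hl : T.level c = T.level b + 1 := T.level_parent _ _ hbc
    rw [← hl, hζ, hbc] at hp
    exact (Option.some_injective _ hp.symm)

lemma tentB_root : T.tentB T.root = Set.univ := by
  ext ζ; simp only [Set.mem_univ, iff_true]; exact ⟨0, ζ.seq_zero⟩

lemma tentB_comparable {α β : T.E} {ζ : T.Boundary} (hα : ζ ∈ T.tentB α) (hβ : ζ ∈ T.tentB β) :
    T.Le α β ∨ T.Le β α := by
  rw [mem_tentB_iff] at hα hβ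
  rcases Nat.le_or_le (T.level α) (T.level β) with h | h
  · left; rw [← hα, ← hβ]; exact seq_le ζ h
  · right; rw [← hα, ← hβ]; exact seq_le ζ h

lemma tentB_disjoint_siblings {α β β' : T.E} (hβ : T.parent β = some α)
    (hβ' : T.parent β' = some α) (hne : β ≠ β') : T.tentB β ∩ T.tentB β' = ∅ := by
  ext ζ
  simp only [Set.mem_inter_iff, Set.mem_empty_iff_false, iff_false, not_and]
  intro h1 h2
  rw [mem_tentB_iff] at h1 h2
  have hl : T.level β = T.level β' := by
    rw [T.level_parent _ _ hβ, T.level_parent _ _ hβ']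
  apply hne
  rw [← h1, ← h2, hl]

lemma tentB_decomp (α : T.E) : T.tentB α = ⋃ β ∈ {β : T.E | T.parent β = some α}, T.tentB β := by
  ext ζ
  simp only [Set.mem_iUnion, Set.mem_setOf_eq, exists_prop]
  constructor
  · rintro ⟨n, hn⟩
    refine ⟨ζ.seq (n+1), ?_, ⟨n+1, rfl⟩⟩
    rw [ζ.seq_parent n, hn]
  · rintro ⟨β, hβ, hζ⟩
    exact tentB_subset (Relation.ReflTransGen.single hβ) hζ

lemma levelSet_finite (n : ℕ) : {α : T.E | T.level α = n}.Finite := by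
  induction n with
  | zero =>
    apply Set.Finite.subset (Set.finite_singleton T.root)
    intro α h; exact eq_root_of_level_eq_zero h
  | succ n ih =>
    apply Set.Finite.subset (Set.Finite.biUnion ih (fun α _ => T.locFin α))
    intro β hβ
    simp only [Set.mem_setOf_eq] at hβ
    have hne : β ≠ T.root := by
      intro he; rw [he, T.level_root] at hβ; exact Nat.noConfusion hβ
    obtain ⟨γ, hγ⟩ := Option.isSome_iff_exists.mp (T.parent_isSome β hne)
    have := T.level_parent β γ hγ
    simp only [Set.mem_iUnion, Set.mem_setOf_eq, exists_prop]
    exact ⟨γ, show T.level γ = n by omega, hγ⟩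

lemma countable_E : Countable T.E := by
  have : (Set.univ : Set T.E).Countable := by
    have : (Set.univ : Set T.E) ⊆ ⋃ n, {α : T.E | T.level α = n} := by
      intro α _; exact Set.mem_iUnion.mpr ⟨T.level α, rfl⟩
    exact Set.Countable.mono this (Set.countable_iUnion (fun n => (levelSet_finite n).countable))
  exact Set.countable_univ_iff.mp this

lemma le_root_all (α : T.E) : T.Le T.root α := by
  suffices h : ∀ (n : ℕ) (α : T.E), T.level α = n → T.Le T.root α from h _ α rfl
  intro n
  induction n using Nat.strong_induction_on with
  | _ n IH =>
    intro α hn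
    by_cases hr : α = T.root
    · rw [hr]; exact le_refl' _
    · obtain ⟨β, hβ⟩ := Option.isSome_iff_exists.mp (T.parent_isSome α hr)
      exact (IH (T.level β) (hn ▸ level_lt_of_parent hβ) β rfl).tail hβ

end BCF
namespace BCF

variable {T : RTree}

lemma isOpen_tentB (α : T.E) : @IsOpen _ T.ttop (T.tentB α) :=
  TopologicalSpace.GenerateOpen.basic _ ⟨α, rfl⟩

lemma measurableSet_tentB (α : T.E) : MeasurableSet[T.tborel] (T.tentB α) := by
  rw [RTree.tborel]
  exact MeasurableSpace.measurableSet_generateFrom (isOpen_tentB α)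

/-- Every open set of the boundary topology is a union of tents. -/
lemma open_union_tents {U : Set T.Boundary}
    (hU : TopologicalSpace.GenerateOpen {s | ∃ α, s = T.tentB α} U) :
    ∀ ζ ∈ U, ∃ α, ζ ∈ T.tentB α ∧ T.tentB α ⊆ U := by
  induction hU with
  | basic s hs =>
    obtain ⟨α, rfl⟩ := hs
    exact fun ζ hζ => ⟨α, hζ, subset_rfl⟩
  | univ =>
    refine fun ζ _ => ⟨T.root, ?_, Set.subset_univ _⟩
    rw [tentB_root]; exact Set.mem_univ ζ
  | inter s t _ _ ihs iht =>
    rintro ζ ⟨hζs, hζt⟩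
    obtain ⟨α, hα, hαs⟩ := ihs ζ hζs
    obtain ⟨β, hβ, hβt⟩ := iht ζ hζt
    rcases tentB_comparable hα hβ with h | h
    · exact ⟨β, hβ, fun ξ hξ => ⟨hαs (tentB_subset h hξ), hβt hξ⟩⟩
    · exact ⟨α, hα, fun ξ hξ => ⟨hαs hξ, hβt (tentB_subset h hξ)⟩⟩
  | sUnion S _ ih =>
    rintro ζ ⟨s, hs, hζ⟩
    obtain ⟨α, hα, hαs⟩ := ih s hs ζ hζ
    exact ⟨α, hα, hαs.trans (Set.subset_sUnion_of_mem hs)⟩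

lemma tborel_eq : T.tborel = MeasurableSpace.generateFrom {s | ∃ α, s = T.tentB α} := by
  apply le_antisymm
  · rw [RTree.tborel, borel]
    apply MeasurableSpace.generateFrom_le
    intro U hU
    have h : ∀ ζ ∈ U, ∃ α, ζ ∈ T.tentB α ∧ T.tentB α ⊆ U := open_union_tents hU
    have hUeq : U = ⋃ α : {α : T.E // T.tentB α ⊆ U}, T.tentB α.1 := by
      ext ζ
      simp only [Set.mem_iUnion]
      constructor
      · intro hζ
        obtain ⟨α, hα, hαU⟩ := h ζ hζ
        exact ⟨⟨α, hαU⟩, hα⟩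
      · rintro ⟨⟨α, hαU⟩, hα⟩
        exact hαU hα
    rw [hUeq]
    have : Countable T.E := countable_E
    exact MeasurableSet.iUnion (fun α =>
      MeasurableSpace.measurableSet_generateFrom ⟨α.1, rfl⟩)
  · apply MeasurableSpace.generateFrom_le
    rintro s ⟨α, rfl⟩
    exact measurableSet_tentB α

/-- Forward additivity from a measure. -/
lemma additivity_of_measure (μ : @Measure T.Boundary T.tborel)
    (hfin : @IsFiniteMeasure _ T.tborel μ) (M : T.E → ℝ)
    (hμ : ∀ α : T.E, M α = (μ (T.tentB α)).toReal) (α : T.E) :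
    M α = ∑ β ∈ (T.locFin α).toFinset, M β := by
  letI := T.tborel
  have hdec : T.tentB α = ⋃ β ∈ (T.locFin α).toFinset, T.tentB β := by
    rw [tentB_decomp (T := T) α]
    ext ζ
    constructor
    · intro hζ
      rw [Set.mem_iUnion₂] at hζ
      obtain ⟨β, hβ, h⟩ := hζ
      exact Set.mem_biUnion ((T.locFin α).mem_toFinset.mpr hβ) h
    · intro hζ
      rw [Set.mem_iUnion₂] at hζ
      obtain ⟨β, hβ, h⟩ := hζ
      exact Set.mem_biUnion ((T.locFin α).mem_toFinset.mp hβ) h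
  have hsum : μ (T.tentB α) = ∑ β ∈ (T.locFin α).toFinset, μ (T.tentB β) := by
    rw [hdec]
    apply measure_biUnion_finset
    · intro β hβ β' hβ' hne
      have hβ2 : T.parent β = some α := (T.locFin α).mem_toFinset.mp (Finset.mem_coe.mp hβ)
      have hβ2' : T.parent β' = some α := (T.locFin α).mem_toFinset.mp (Finset.mem_coe.mp hβ')
      exact Set.disjoint_iff_inter_eq_empty.mpr (tentB_disjoint_siblings hβ2 hβ2' hne)
    · intro β _
      exact measurableSet_tentB β
  rw [hμ α, hsum, ENNReal.toReal_sum (fun β _ => measure_ne_top μ _)]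
  exact Finset.sum_congr rfl (fun β _ => (hμ β).symm)

end BCF
namespace BCF

open Classical in
noncomputable def aFun (T : RTree) (M : T.E → ℝ) (ι : T.E → ℕ) (α : T.E) : ℝ :=
  if h : α = T.root then 0
  else
    aFun T M ι ((T.parent α).get (T.parent_isSome α h)) +
      ∑ γ ∈ (T.locFin ((T.parent α).get (T.parent_isSome α h))).toFinset.filter
        (fun γ => ι γ < ι α), M γ
termination_by T.level α
decreasing_by
  exact level_lt_of_parent (Option.some_get (T.parent_isSome α h)).symm

variable {T : RTree} {M : T.E → ℝ} {ι : T.E → ℕ}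

lemma aFun_root : aFun T M ι T.root = 0 := by
  rw [aFun]; simp

lemma aFun_child {α β : T.E} (h : T.parent β = some α) :
    aFun T M ι β = aFun T M ι α
      + ∑ γ ∈ (T.locFin α).toFinset.filter (fun γ => ι γ < ι β), M γ := by
  rw [aFun, dif_neg (ne_root_of_parent h)]
  have hg : (T.parent β).get (T.parent_isSome β (ne_root_of_parent h)) = α := by
    simp [h]
  simp only [hg]

end BCF
namespace BCF

variable {T : RTree} {M : T.E → ℝ} {ι : T.E → ℕ}

open Classical in
lemma aFun_sibling (hM : ∀ α, 0 ≤ M α) {α β β' : T.E} (hβ : T.parent β = some α)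
    (hβ' : T.parent β' = some α) (hlt : ι β < ι β') :
    aFun T M ι β + M β ≤ aFun T M ι β' := by
  rw [aFun_child hβ, aFun_child hβ']
  have hnotmem : β ∉ (T.locFin α).toFinset.filter (fun γ => ι γ < ι β) := by
    simp
  have hsub : insert β ((T.locFin α).toFinset.filter (fun γ => ι γ < ι β))
      ⊆ (T.locFin α).toFinset.filter (fun γ => ι γ < ι β') := by
    intro γ hγ
    rcases Finset.mem_insert.mp hγ with rfl | hγ
    · simp only [Finset.mem_filter, Set.Finite.mem_toFinset, Set.mem_setOf_eq]
      exact ⟨hβ, hlt⟩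
    · simp only [Finset.mem_filter] at hγ ⊢
      exact ⟨hγ.1, hγ.2.trans hlt⟩
  have := Finset.sum_le_sum_of_subset_of_nonneg hsub (fun γ _ _ => hM γ)
  rw [Finset.sum_insert hnotmem] at this
  linarith

lemma aFun_le_child (hM : ∀ α, 0 ≤ M α) {α β : T.E} (hβ : T.parent β = some α) :
    aFun T M ι α ≤ aFun T M ι β := by
  rw [aFun_child hβ]
  have : (0:ℝ) ≤ ∑ γ ∈ (T.locFin α).toFinset.filter (fun γ => ι γ < ι β), M γ :=
    Finset.sum_nonneg (fun γ _ => hM γ)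
  linarith

open Classical in
lemma aFun_child_top (hM : ∀ α, 0 ≤ M α)
    (hadd : ∀ α, M α = ∑ γ ∈ (T.locFin α).toFinset, M γ) {α β : T.E}
    (hβ : T.parent β = some α) :
    aFun T M ι β + M β ≤ aFun T M ι α + M α := by
  rw [aFun_child hβ]
  have hnotmem : β ∉ (T.locFin α).toFinset.filter (fun γ => ι γ < ι β) := by simp
  have hsub : insert β ((T.locFin α).toFinset.filter (fun γ => ι γ < ι β))
      ⊆ (T.locFin α).toFinset := by
    intro γ hγ
    rcases Finset.mem_insert.mp hγ with rfl | hγ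
    · simp only [Set.Finite.mem_toFinset, Set.mem_setOf_eq]; exact hβ
    · exact Finset.mem_of_mem_filter _ hγ
  have := Finset.sum_le_sum_of_subset_of_nonneg hsub (fun γ _ _ => hM γ)
  rw [Finset.sum_insert hnotmem, ← hadd α] at this
  linarith

lemma Iv_subset (hM : ∀ α, 0 ≤ M α)
    (hadd : ∀ α, M α = ∑ γ ∈ (T.locFin α).toFinset, M γ) {α β : T.E}
    (hβ : T.parent β = some α) :
    Set.Ico (aFun T M ι β) (aFun T M ι β + M β)
      ⊆ Set.Ico (aFun T M ι α) (aFun T M ι α + M α) := by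
  apply Set.Ico_subset_Ico
  · exact aFun_le_child hM hβ
  · exact aFun_child_top hM hadd hβ

lemma Iv_unique (hι : Function.Injective ι) (hM : ∀ α, 0 ≤ M α) {α β β' : T.E} {t : ℝ}
    (hβ : T.parent β = some α) (hβ' : T.parent β' = some α)
    (ht : t ∈ Set.Ico (aFun T M ι β) (aFun T M ι β + M β))
    (ht' : t ∈ Set.Ico (aFun T M ι β') (aFun T M ι β' + M β')) : β = β' := by
  rcases Nat.lt_trichotomy (ι β) (ι β') with h | h | h
  · have := aFun_sibling hM hβ hβ' h
    exfalso; linarith [ht.1, ht'.1, ht.2, ht'.2]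
  · exact hι h
  · have := aFun_sibling hM hβ' hβ h
    exfalso; linarith [ht.1, ht'.2]

open Classical in
lemma Iv_exists (hι : Function.Injective ι) (hM : ∀ α, 0 ≤ M α)
    (hadd : ∀ α, M α = ∑ γ ∈ (T.locFin α).toFinset, M γ)
    {α : T.E} (hne : ∃ β, T.parent β = some α) {t : ℝ}
    (ht : t ∈ Set.Ico (aFun T M ι α) (aFun T M ι α + M α)) :
    ∃ β, T.parent β = some α ∧ t ∈ Set.Ico (aFun T M ι β) (aFun T M ι β + M β) := by
  classical
  set s := (T.locFin α).toFinset with hs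
  have hsne : s.Nonempty := by
    obtain ⟨β, hβ⟩ := hne
    exact ⟨β, by simp [hs, Set.Finite.mem_toFinset]; exact hβ⟩
  -- the candidate set: children whose left endpoint is ≤ t
  set A := s.filter (fun γ => aFun T M ι γ ≤ t) with hA
  have hAne : A.Nonempty := by
    obtain ⟨β₀, hβ₀s, hβ₀min⟩ := s.exists_min_image ι hsne
    have hβ₀ : T.parent β₀ = some α := by
      simpa [hs, Set.Finite.mem_toFinset] using hβ₀s
    have hfe : (T.locFin α).toFinset.filter (fun γ => ι γ < ι β₀) = ∅ := by
      apply Finset.filter_eq_empty_iff.mpr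
      intro γ hγ
      have := hβ₀min γ (by rwa [← hs] at hγ)
      omega
    have ha0 : aFun T M ι β₀ = aFun T M ι α := by
      rw [aFun_child hβ₀, hfe, Finset.sum_empty, add_zero]
    refine ⟨β₀, Finset.mem_filter.mpr ⟨hβ₀s, ?_⟩⟩
    rw [ha0]; exact ht.1
  obtain ⟨β, hβA, hβmax⟩ := A.exists_max_image ι hAne
  have hβs : β ∈ s := (Finset.mem_filter.mp hβA).1
  have hβle : aFun T M ι β ≤ t := (Finset.mem_filter.mp hβA).2
  have hβp : T.parent β = some α := by simpa [hs, Set.Finite.mem_toFinset] using hβs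
  refine ⟨β, hβp, hβle, ?_⟩
  by_contra hcon
  push_neg at hcon
  -- hcon : aFun β + M β ≤ t
  by_cases hmax : ∀ γ ∈ s, ι γ ≤ ι β
  · -- β is the last child: a β + M β = a α + M α
    have hfe : s.filter (fun γ => ι γ < ι β) = s.erase β := by
      ext γ
      simp only [Finset.mem_filter, Finset.mem_erase]
      constructor
      · rintro ⟨h1, h2⟩
        exact ⟨fun he => by subst he; omega, h1⟩
      · rintro ⟨h1, h2⟩
        have hle := hmax γ h2
        rcases Nat.lt_or_ge (ι γ) (ι β) with h | h
        · exact ⟨h2, h⟩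
        · exact absurd (hι (Nat.le_antisymm hle h)) h1
    have : aFun T M ι β + M β = aFun T M ι α + M α := by
      rw [aFun_child hβp, ← hs, hfe]
      have := Finset.sum_erase_add s M hβs
      rw [hadd α, ← hs]
      linarith [Finset.sum_erase_add s M hβs]
    linarith [ht.2]
  · push_neg at hmax
    obtain ⟨γ₀, hγ₀s, hγ₀⟩ := hmax
    -- take the ι-minimal element among children with ι β < ι ·
    set B := s.filter (fun γ => ι β < ι γ) with hB
    have hBne : B.Nonempty := ⟨γ₀, Finset.mem_filter.mpr ⟨hγ₀s, by omega⟩⟩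
    obtain ⟨β', hβ'B, hβ'min⟩ := B.exists_min_image ι hBne
    have hβ's : β' ∈ s := (Finset.mem_filter.mp hβ'B).1
    have hββ' : ι β < ι β' := (Finset.mem_filter.mp hβ'B).2
    have hβ'p : T.parent β' = some α := by simpa [hs, Set.Finite.mem_toFinset] using hβ's
    have hfe : s.filter (fun γ => ι γ < ι β') = insert β (s.filter (fun γ => ι γ < ι β)) := by
      ext γ
      simp only [Finset.mem_filter, Finset.mem_insert]
      constructor
      · rintro ⟨h1, h2⟩
        rcases Nat.lt_trichotomy (ι γ) (ι β) with h | h | h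
        · exact Or.inr ⟨h1, h⟩
        · exact Or.inl (hι h)
        · exfalso
          have := hβ'min γ (Finset.mem_filter.mpr ⟨h1, h⟩)
          omega
      · rintro (rfl | ⟨h1, h2⟩)
        · exact ⟨hβs, hββ'⟩
        · exact ⟨h1, h2.trans hββ'⟩
    have hnotmem : β ∉ s.filter (fun γ => ι γ < ι β) := by simp
    have ha' : aFun T M ι β' = aFun T M ι β + M β := by
      rw [aFun_child hβ'p, aFun_child hβp, ← hs, hfe, Finset.sum_insert hnotmem]
      ring
    have : β' ∈ A := Finset.mem_filter.mpr ⟨hβ's, by rw [ha']; linarith⟩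
    have := hβmax β' this
    omega

end BCF
namespace BCF

open Classical in
noncomputable def eSeq (T : RTree) (M : T.E → ℝ) (ι : T.E → ℕ)
    (hleaf : ∀ α : T.E, ∃ β, T.parent β = some α) (t : ℝ) : ℕ → T.E
  | 0 => T.root
  | n+1 =>
    if h : ∃ β, T.parent β = some (eSeq T M ι hleaf t n)
        ∧ t ∈ Set.Ico (aFun T M ι β) (aFun T M ι β + M β)
    then h.choose else (hleaf (eSeq T M ι hleaf t n)).choose

noncomputable def zSeq (T : RTree) (hleaf : ∀ α : T.E, ∃ β, T.parent β = some α) : ℕ → T.E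
  | 0 => T.root
  | n+1 => (hleaf (zSeq T hleaf n)).choose

variable {T : RTree} {M : T.E → ℝ} {ι : T.E → ℕ}
  {hleaf : ∀ α : T.E, ∃ β, T.parent β = some α}

lemma eSeq_parent (t : ℝ) (n : ℕ) :
    T.parent (eSeq T M ι hleaf t (n+1)) = some (eSeq T M ι hleaf t n) := by
  rw [eSeq]
  split_ifs with h
  · exact h.choose_spec.1
  · exact (hleaf _).choose_spec

noncomputable def Psi (T : RTree) (M : T.E → ℝ) (ι : T.E → ℕ)
    (hleaf : ∀ α : T.E, ∃ β, T.parent β = some α) (t : ℝ) : T.Boundary :=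
  ⟨eSeq T M ι hleaf t, rfl, eSeq_parent t⟩

noncomputable def zPt (T : RTree) (hleaf : ∀ α : T.E, ∃ β, T.parent β = some α) : T.Boundary :=
  ⟨zSeq T hleaf, rfl, fun n => (hleaf _).choose_spec⟩

lemma Iv_subset_of_le (hM : ∀ α, 0 ≤ M α)
    (hadd : ∀ α, M α = ∑ γ ∈ (T.locFin α).toFinset, M γ) {γ α : T.E} (h : T.Le γ α) :
    Set.Ico (aFun T M ι α) (aFun T M ι α + M α)
      ⊆ Set.Ico (aFun T M ι γ) (aFun T M ι γ + M γ) := by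
  induction h with
  | refl => exact subset_rfl
  | tail _ hstep ih => exact (Iv_subset hM hadd hstep).trans ih

lemma Iv_subset_root (hM : ∀ α, 0 ≤ M α)
    (hadd : ∀ α, M α = ∑ γ ∈ (T.locFin α).toFinset, M γ) (α : T.E) :
    Set.Ico (aFun T M ι α) (aFun T M ι α + M α)
      ⊆ Set.Ico (aFun T M ι T.root) (aFun T M ι T.root + M T.root) :=
  Iv_subset_of_le hM hadd (le_root_all α)

lemma eSeq_mem (hι : Function.Injective ι) (hM : ∀ α, 0 ≤ M α)
    (hadd : ∀ α, M α = ∑ γ ∈ (T.locFin α).toFinset, M γ) {t : ℝ}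
    (ht : t ∈ Set.Ico (aFun T M ι T.root) (aFun T M ι T.root + M T.root)) (n : ℕ) :
    t ∈ Set.Ico (aFun T M ι (eSeq T M ι hleaf t n))
      (aFun T M ι (eSeq T M ι hleaf t n) + M (eSeq T M ι hleaf t n)) := by
  induction n with
  | zero => exact ht
  | succ n ih =>
    rw [eSeq]
    have hex := Iv_exists hι hM hadd (hleaf (eSeq T M ι hleaf t n)) ih
    have hex' : ∃ β, T.parent β = some (eSeq T M ι hleaf t n)
        ∧ t ∈ Set.Ico (aFun T M ι β) (aFun T M ι β + M β) := hex
    rw [dif_pos hex']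
    exact hex'.choose_spec.2

lemma eSeq_eq_zSeq (hM : ∀ α, 0 ≤ M α)
    (hadd : ∀ α, M α = ∑ γ ∈ (T.locFin α).toFinset, M γ) {t : ℝ}
    (ht : t ∉ Set.Ico (aFun T M ι T.root) (aFun T M ι T.root + M T.root)) (n : ℕ) :
    eSeq T M ι hleaf t n = zSeq T hleaf n := by
  induction n with
  | zero => rfl
  | succ n ih =>
    rw [eSeq, zSeq]
    have hno : ¬ ∃ β, T.parent β = some (eSeq T M ι hleaf t n)
        ∧ t ∈ Set.Ico (aFun T M ι β) (aFun T M ι β + M β) := by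
      rintro ⟨β, _, htβ⟩
      exact ht (Iv_subset_root hM hadd β htβ)
    rw [dif_neg hno]
    exact congrArg (fun x => (hleaf x).choose) ih

lemma Psi_eq_zPt (hM : ∀ α, 0 ≤ M α)
    (hadd : ∀ α, M α = ∑ γ ∈ (T.locFin α).toFinset, M γ) {t : ℝ}
    (ht : t ∉ Set.Ico (aFun T M ι T.root) (aFun T M ι T.root + M T.root)) :
    Psi T M ι hleaf t = zPt T hleaf := by
  have h : eSeq T M ι hleaf t = zSeq T hleaf := funext (eSeq_eq_zSeq hM hadd ht)
  unfold Psi zPt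
  simp only [h]

lemma Psi_mem_tentB (hι : Function.Injective ι) (hM : ∀ α, 0 ≤ M α)
    (hadd : ∀ α, M α = ∑ γ ∈ (T.locFin α).toFinset, M γ) {t : ℝ}
    (ht : t ∈ Set.Ico (aFun T M ι T.root) (aFun T M ι T.root + M T.root)) (α : T.E) :
    Psi T M ι hleaf t ∈ T.tentB α
      ↔ t ∈ Set.Ico (aFun T M ι α) (aFun T M ι α + M α) := by
  constructor
  · rintro ⟨n, hn⟩
    have := eSeq_mem (hleaf := hleaf) hι hM hadd ht n
    rw [show (Psi T M ι hleaf t).seq = eSeq T M ι hleaf t from rfl] at hn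
    rw [hn] at this
    exact this
  · intro htα
    suffices h : ∀ (n : ℕ) (α : T.E), T.level α = n →
        t ∈ Set.Ico (aFun T M ι α) (aFun T M ι α + M α) → eSeq T M ι hleaf t n = α by
      exact ⟨T.level α, h _ α rfl htα⟩
    clear htα
    intro n
    induction n with
    | zero =>
      intro α hl _
      exact (eq_root_of_level_eq_zero hl).symm
    | succ n ih =>
      intro α hl htα
      have hαr : α ≠ T.root := by
        intro he; rw [he, T.level_root] at hl; exact Nat.noConfusion hl
      obtain ⟨γ, hγ⟩ := Option.isSome_iff_exists.mp (T.parent_isSome α hαr)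
      have hlγ : T.level γ = n := by
        have := T.level_parent α γ hγ; omega
      have htγ : t ∈ Set.Ico (aFun T M ι γ) (aFun T M ι γ + M γ) :=
        Iv_subset hM hadd hγ htα
      have hn := ih γ hlγ htγ
      rw [eSeq]
      have hex' : ∃ β, T.parent β = some (eSeq T M ι hleaf t n)
          ∧ t ∈ Set.Ico (aFun T M ι β) (aFun T M ι β + M β) := by
        refine ⟨α, ?_, htα⟩
        rw [hn]; exact hγ
      rw [dif_pos hex']
      have hspec := hex'.choose_spec
      apply Iv_unique hι hM (hspec.1.trans (by rw [hn])) hγ hspec.2 htα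
  
lemma exists_measure (T : RTree) (hleaf : ∀ α : T.E, ∃ β, T.parent β = some α)
    (M : T.E → ℝ) (hM : ∀ α, 0 ≤ M α)
    (hadd : ∀ α, M α = ∑ γ ∈ (T.locFin α).toFinset, M γ) :
    ∃ μ : @Measure T.Boundary T.tborel,
      @IsFiniteMeasure _ T.tborel μ ∧ ∀ α : T.E, M α = (μ (T.tentB α)).toReal := by
  classical
  letI := T.tborel
  have : Countable T.E := countable_E
  obtain ⟨ι, hι⟩ : ∃ f : T.E → ℕ, Function.Injective f := by
    exact Countable.exists_injective_nat T.E
  set I₀ : Set ℝ := Set.Ico (aFun T M ι T.root) (aFun T M ι T.root + M T.root) with hI₀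
  -- preimage description
  have hpre : ∀ α : T.E, Psi T M ι hleaf ⁻¹' (T.tentB α) =
      if zPt T hleaf ∈ T.tentB α
      then Set.Ico (aFun T M ι α) (aFun T M ι α + M α) ∪ I₀ᶜ
      else Set.Ico (aFun T M ι α) (aFun T M ι α + M α) := by
    intro α
    split_ifs with hz
    · ext t
      simp only [Set.mem_preimage, Set.mem_union, Set.mem_compl_iff]
      constructor
      · intro h
        by_cases htI : t ∈ I₀
        · exact Or.inl ((Psi_mem_tentB hι hM hadd htI α).mp h)
        · exact Or.inr htI
      · rintro (h | h)
        · exact (Psi_mem_tentB hι hM hadd (Iv_subset_root hM hadd α h) α).mpr h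
        · rw [Psi_eq_zPt hM hadd h]; exact hz
    · ext t
      simp only [Set.mem_preimage]
      constructor
      · intro h
        by_cases htI : t ∈ I₀
        · exact (Psi_mem_tentB hι hM hadd htI α).mp h
        · exact absurd (Psi_eq_zPt hM hadd htI ▸ h) hz
      · intro h
        exact (Psi_mem_tentB hι hM hadd (Iv_subset_root hM hadd α h) α).mpr h
  have hmeas : @Measurable ℝ T.Boundary _ T.tborel (Psi T M ι hleaf) := by
    rw [tborel_eq]
    apply measurable_generateFrom
    rintro s ⟨α, rfl⟩
    rw [hpre α]
    split_ifs with hz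
    · exact (measurableSet_Ico).union (measurableSet_Ico).compl
    · exact measurableSet_Ico
  refine ⟨(MeasureTheory.volume.restrict I₀).map (Psi T M ι hleaf), ?_, ?_⟩
  · constructor
    rw [Measure.map_apply hmeas MeasurableSet.univ, Set.preimage_univ,
      Measure.restrict_apply MeasurableSet.univ, Set.univ_inter, hI₀, Real.volume_Ico]
    exact ENNReal.ofReal_lt_top
  · intro α
    rw [Measure.map_apply hmeas (measurableSet_tentB α),
      Measure.restrict_apply (hmeas (measurableSet_tentB α)), hpre α]
    have hIv : Set.Ico (aFun T M ι α) (aFun T M ι α + M α) ∩ I₀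
        = Set.Ico (aFun T M ι α) (aFun T M ι α + M α) :=
      Set.inter_eq_self_of_subset_left (Iv_subset_root hM hadd α)
    have hvol : MeasureTheory.volume (Set.Ico (aFun T M ι α) (aFun T M ι α + M α))
        = ENNReal.ofReal (M α) := by
      rw [Real.volume_Ico]; congr 1; ring
    split_ifs with hz
    · rw [Set.union_inter_distrib_right, Set.compl_inter_self, Set.union_empty, hIv, hvol,
        ENNReal.toReal_ofReal (hM α)]
    · rw [hIv, hvol, ENNReal.toReal_ofReal (hM α)]

end BCF
namespace BCF

lemma key_algebra (T : RTree) {p q : ℝ} (hp : 1 < p) (hpq : 1 / p + 1 / q = 1)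
    (M : T.E → ℝ) (hM : ∀ α : T.E, 0 ≤ M α)
    (hlt : ∀ α : T.E, ∑ᶠ γ ∈ {γ : T.E | T.Le γ α}, M γ ^ (q - 1) < 1) (α : T.E) :
    (M α / (1 - ∑ᶠ γ ∈ {γ : T.E | T.Le γ α ∧ γ ≠ α}, M γ ^ (q - 1)) ^ (p / q) =
      (∑ᶠ β ∈ {β : T.E | T.parent β = some α},
          (M β / (1 - ∑ᶠ γ ∈ {γ : T.E | T.Le γ β ∧ γ ≠ β}, M γ ^ (q - 1)) ^ (p / q))) /
        (1 + (∑ᶠ β ∈ {β : T.E | T.parent β = some α},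
          (M β / (1 - ∑ᶠ γ ∈ {γ : T.E | T.Le γ β ∧ γ ≠ β}, M γ ^ (q - 1)) ^ (p / q))) ^ (q - 1))
          ^ (p - 1))
    ↔ M α = ∑ γ ∈ (T.locFin α).toFinset, M γ := by
  classical
  -- exponent arithmetic
  have hp0 : 0 < p := lt_trans one_pos hp
  have hpne : p ≠ 0 := ne_of_gt hp0
  have hq0 : 1/q = 1 - 1/p := by linarith
  have hq1pos : 0 < 1/q := by
    rw [hq0]
    have : 1/p < 1 := by rw [div_lt_one hp0]; exact hp
    linarith
  have hqpos : 0 < q := by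
    by_contra h
    push_neg at h
    have : 1/q ≤ 0 := div_nonpos_of_nonneg_of_nonpos zero_le_one h
    linarith
  have hqne : q ≠ 0 := ne_of_gt hqpos
  have hq1lt : 1/q < 1 := by
    rw [hq0]
    have : 0 < 1/p := by positivity
    linarith
  have hqgt : 1 < q := by
    have h1 : (1/q) * q = 1 := by field_simp
    nlinarith
  have hsumpq : q + p = p * q := by
    field_simp at hpq
    linarith
  have hpq1 : p / q = p - 1 := by
    rw [div_eq_iff hqne]; nlinarith
  have hpq2 : (p - 1) * (q - 1) = 1 := by nlinarith
  have hqm1 : 0 < q - 1 := by linarith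
  have hpm1 : 0 < p - 1 := by linarith
  -- path sums
  have hfin := pathSet_finite (T := T) α
  have hfin' := pathSet_strict_finite (T := T) α
  set A' := ∑ᶠ γ ∈ {γ : T.E | T.Le γ α ∧ γ ≠ α}, M γ ^ (q - 1) with hA'
  set Pa := ∑ᶠ γ ∈ {γ : T.E | T.Le γ α}, M γ ^ (q - 1) with hPa
  have hsplit : Pa = M α ^ (q - 1) + A' := by
    rw [hPa, hA', finsum_mem_eq_finite_toFinset_sum _ hfin,
      finsum_mem_eq_finite_toFinset_sum _ hfin']
    have hins : hfin.toFinset = insert α hfin'.toFinset := by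
      ext γ
      simp only [Set.Finite.mem_toFinset, Finset.mem_insert]
      rw [pathSet_insert (T := T) α]
      simp only [Set.mem_insert_iff, Set.mem_setOf_eq]
    rw [hins, Finset.sum_insert (by simp)]
  have hPalt : Pa < 1 := hlt α
  have hMα : 0 ≤ M α ^ (q - 1) := Real.rpow_nonneg (hM α) _
  have hA'lt : A' < 1 := by linarith
  set D : ℝ := 1 - Pa with hD
  have hDpos : 0 < D := by rw [hD]; linarith
  have hD'eq : 1 - A' = D + M α ^ (q - 1) := by rw [hD]; linarith
  -- rewrite the children sum
  set s : ℝ := ∑ γ ∈ (T.locFin α).toFinset, M γ with hs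
  have hsnn : 0 ≤ s := Finset.sum_nonneg (fun γ _ => hM γ)
  have hSsum : (∑ᶠ β ∈ {β : T.E | T.parent β = some α},
      (M β / (1 - ∑ᶠ γ ∈ {γ : T.E | T.Le γ β ∧ γ ≠ β}, M γ ^ (q - 1)) ^ (p / q)))
      = s / D ^ (p - 1) := by
    rw [finsum_mem_eq_finite_toFinset_sum _ (T.locFin α)]
    have : ∀ β ∈ (T.locFin α).toFinset,
        M β / (1 - ∑ᶠ γ ∈ {γ : T.E | T.Le γ β ∧ γ ≠ β}, M γ ^ (q - 1)) ^ (p / q)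
          = M β / D ^ (p - 1) := by
      intro β hβ
      have hβp : T.parent β = some α := by
        simpa [Set.Finite.mem_toFinset] using hβ
      rw [pathSet_strict_child hβp, ← hPa, ← hD, hpq1]
    rw [Finset.sum_congr rfl this, ← Finset.sum_div, ← hs]
  -- general form of the continued-fraction map
  have hform : ∀ x : ℝ, 0 ≤ x →
      (x / D ^ (p - 1)) / (1 + (x / D ^ (p - 1)) ^ (q - 1)) ^ (p - 1)
        = x / (D + x ^ (q - 1)) ^ (p - 1) := by
    intro x hx
    have hDp : (0:ℝ) < D ^ (p - 1) := Real.rpow_pos_of_pos hDpos _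
    have hxq : 0 ≤ x ^ (q - 1) := Real.rpow_nonneg hx _
    have hDx : (0:ℝ) < D + x ^ (q - 1) := by linarith
    have h1 : (x / D ^ (p - 1)) ^ (q - 1) = x ^ (q - 1) / D := by
      rw [Real.div_rpow hx (le_of_lt hDp), ← Real.rpow_mul (le_of_lt hDpos), hpq2,
        Real.rpow_one]
    rw [h1]
    have h2 : 1 + x ^ (q - 1) / D = (D + x ^ (q - 1)) / D := by
      field_simp
    rw [h2, Real.div_rpow (le_of_lt hDx) (le_of_lt hDpos)]
    have hDxp : (0:ℝ) < (D + x ^ (q - 1)) ^ (p - 1) := Real.rpow_pos_of_pos hDx _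
    field_simp
  -- the function g x = x / (D + x^{q-1})^{p-1} is strictly monotone on [0, ∞)
  have hmono : ∀ x y : ℝ, 0 ≤ x → 0 ≤ y → x < y →
      x / (D + x ^ (q - 1)) ^ (p - 1) < y / (D + y ^ (q - 1)) ^ (p - 1) := by
    intro x y hx hy hxy
    have hu : x ^ (q - 1) < y ^ (q - 1) := Real.rpow_lt_rpow hx hxy hqm1
    have hxq : 0 ≤ x ^ (q - 1) := Real.rpow_nonneg hx _
    have hyq : 0 ≤ y ^ (q - 1) := Real.rpow_nonneg hy _
    have hDx : (0:ℝ) < D + x ^ (q - 1) := by linarith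
    have hDy : (0:ℝ) < D + y ^ (q - 1) := by linarith
    set gx := x / (D + x ^ (q - 1)) ^ (p - 1) with hgx
    set gy := y / (D + y ^ (q - 1)) ^ (p - 1) with hgy
    have hgxq : gx ^ (q - 1) = x ^ (q - 1) / (D + x ^ (q - 1)) := by
      rw [hgx, Real.div_rpow hx (le_of_lt (Real.rpow_pos_of_pos hDx _)),
        ← Real.rpow_mul (le_of_lt hDx), hpq2, Real.rpow_one]
    have hgyq : gy ^ (q - 1) = y ^ (q - 1) / (D + y ^ (q - 1)) := by
      rw [hgy, Real.div_rpow hy (le_of_lt (Real.rpow_pos_of_pos hDy _)),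
        ← Real.rpow_mul (le_of_lt hDy), hpq2, Real.rpow_one]
    have hlt' : gx ^ (q - 1) < gy ^ (q - 1) := by
      rw [hgxq, hgyq, div_lt_div_iff₀ hDx hDy]
      nlinarith
    by_contra hcon
    push_neg at hcon
    have hgynn : 0 ≤ gy :=
      div_nonneg hy (le_of_lt (Real.rpow_pos_of_pos hDy _))
    have := Real.rpow_le_rpow hgynn hcon (le_of_lt hqm1)
    linarith
  -- assemble
  rw [hSsum, hform s hsnn, hD'eq, hpq1]
  constructor
  · intro h
    rcases lt_trichotomy (M α) s with hc | hc | hc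
    · exact absurd h (ne_of_lt (hmono _ _ (hM α) hsnn hc))
    · exact hc
    · exact absurd h (ne_of_gt (hmono _ _ hsnn (hM α) hc))
  · intro h
    rw [h]

end BCF

/-- Branched continued fractions: let `M : E(T) → ℝ₊` with `IM_p < 1` at every
vertex of a locally finite leafless rooted tree, and define the rescaled function
`c(α) = M(α)/(1 − IM_p(b(α)))^{p/p′}`.  Then `M` is the co-potential of a
positive (finite Borel) measure on `∂T` if and only if, for every edge `α`,
`c(α) = S/(1 + S^{p′−1})^{p−1}` where `S = Σ_{β child of α} c(β)`. -/
theorem stmt18 (T : RTree) (hleaf : ∀ α : T.E, ∃ β, T.parent β = some α)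
    (p q : ℝ) (hp : 1 < p) (hpq : 1 / p + 1 / q = 1) (M : T.E → ℝ)
    (hM : ∀ α : T.E, 0 ≤ M α)
    (hlt : ∀ α : T.E, ∑ᶠ γ ∈ {γ : T.E | T.Le γ α}, M γ ^ (q - 1) < 1) :
    letI c : T.E → ℝ := fun α =>
      M α / (1 - ∑ᶠ γ ∈ {γ : T.E | T.Le γ α ∧ γ ≠ α}, M γ ^ (q - 1)) ^ (p / q)
    ((∃ μ : @Measure T.Boundary T.tborel,
        @IsFiniteMeasure _ _ μ ∧ ∀ α : T.E, M α = (μ (T.tentB α)).toReal) ↔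
      ∀ α : T.E,
        c α = (∑ᶠ β ∈ {β : T.E | T.parent β = some α}, c β) /
          (1 + (∑ᶠ β ∈ {β : T.E | T.parent β = some α}, c β) ^ (q - 1)) ^ (p - 1)) := by
  constructor
  · rintro ⟨μ, hfin, hμ⟩ α
    have hadd := BCF.additivity_of_measure μ hfin M hμ α
    exact (BCF.key_algebra T hp hpq M hM hlt α).mpr hadd
  · intro h
    have hadd : ∀ α, M α = ∑ γ ∈ (T.locFin α).toFinset, M γ :=
      fun α => (BCF.key_algebra T hp hpq M hM hlt α).mp (h α)
    exact BCF.exists_measure T hleaf M hM hadd
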